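/- Suppose C : Ω → (0,∞] is a random variable that is independent of the pair (T, D) and satisfies T̃ = T ∧ C a.s. (so that also D̃ = D·1{T ≤ C} a.s.). Then identity of forces of mortality holds: H̃_j(t) = H_j(t) for all t ∈ 𝒥 and all j = 1,…,d (representativity implies identifiability). -/

import Mathlib

open MeasureTheory Set ENNReal ProbabilityTheory

/-- Proposition 4 (part): representativity (existence of an independent censoring time on the
same space) implies identifiability (identity of forces of mortality). -/
theorem independent_censoring_implies_identity_of_forces
    {Ω : Type*} [m0 : MeasurableSpace Ω] (P : Measure Ω) [IsProbabilityMeasure P]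
    (d : ℕ) (hd : 1 ≤ d)
    (T Tt : Ω → ℝ) (D Dt : Ω → ℕ)
    (hT : Measurable T) (hTt : Measurable Tt)
    (hD : Measurable D) (hDt : Measurable Dt)
    (hpos : ∀ᵐ ω ∂P, 0 < Tt ω ∧ Tt ω ≤ T ω)
    (hDrange : ∀ ω, 1 ≤ D ω ∧ D ω ≤ d)
    (hDtrange : ∀ ω, Dt ω ≤ d)
    (hDD : ∀ᵐ ω ∂P, Dt ω = if Tt ω = T ω then D ω else 0)
    (μ μt : ℕ → Measure ℝ)
    (hμ : ∀ j, μ j = Measure.map T (P.restrict {ω | D ω = j}))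
    (hμt : ∀ j, μt j = Measure.map Tt (P.restrict {ω | Dt ω = j}))
    (H Ht : ℕ → ℝ → ℝ≥0∞)
    (hH : ∀ j t, H j t = ∫⁻ s in Ioc 0 t, (P {ω | s ≤ T ω})⁻¹ ∂(μ j))
    (hHt : ∀ j t, Ht j t = ∫⁻ s in Ioc 0 t, (P {ω | s ≤ Tt ω})⁻¹ ∂(μt j))
    (𝒥 : Set ℝ) (h𝒥 : 𝒥 = {t | 0 ≤ t ∧ 0 < P {ω | t < Tt ω}})
    -- the censoring time C : Ω → (0,∞]
    (C : Ω → ℝ≥0∞) (hC : Measurable C) (hCpos : ∀ ω, 0 < C ω)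
    (hindep : IndepFun C (fun ω => (T ω, D ω)) P)
    (hmin : ∀ᵐ ω ∂P, Tt ω = (min (ENNReal.ofReal (T ω)) (C ω)).toReal) :
    -- identity of forces of mortality
    ∀ j, 1 ≤ j → j ≤ d → ∀ t ∈ 𝒥, Ht j t = H j t := by
  intro j hj1 _ t ht
  rw [h𝒥] at ht
  obtain ⟨ht0, htpos⟩ := ht
  set G : ℝ → ℝ≥0∞ := fun s => P {ω | ENNReal.ofReal s ≤ C ω} with hGdef
  have hmne : ∀ ω, min (ENNReal.ofReal (T ω)) (C ω) ≠ ∞ :=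
    fun ω => ne_of_lt (lt_of_le_of_lt (min_le_left _ _) ofReal_lt_top)
  -- combined a.e. good set
  have hae : ∀ᵐ ω ∂P, 0 < T ω ∧ (Dt ω = if Tt ω = T ω then D ω else 0) ∧
      Tt ω = (min (ENNReal.ofReal (T ω)) (C ω)).toReal ∧ 0 < Tt ω := by
    filter_upwards [hpos, hDD, hmin] with ω h1 h2 h3
    exact ⟨lt_of_lt_of_le h1.1 h1.2, h2, h3, h1.1⟩
  -- pointwise characterization of {s ≤ Tt} for good ω and s > 0
  have hchar : ∀ ω, 0 < T ω → Tt ω = (min (ENNReal.ofReal (T ω)) (C ω)).toReal →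
      ∀ s : ℝ, 0 < s → (s ≤ Tt ω ↔ s ≤ T ω ∧ ENNReal.ofReal s ≤ C ω) := by
    intro ω hT0 hTt s _
    rw [hTt, ← ENNReal.ofReal_le_iff_le_toReal (hmne ω), le_min_iff,
      ENNReal.ofReal_le_ofReal_iff hT0.le]
  -- {Tt = T} coincides with {ofReal T ≤ C} for good ω
  have heqT : ∀ ω, 0 < T ω → Tt ω = (min (ENNReal.ofReal (T ω)) (C ω)).toReal →
      (Tt ω = T ω ↔ ENNReal.ofReal (T ω) ≤ C ω) := by
    intro ω hT0 hTt
    constructor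
    · intro h
      have h2 : ENNReal.ofReal (T ω) = min (ENNReal.ofReal (T ω)) (C ω) := by
        conv_lhs => rw [← h, hTt]
        rw [ENNReal.ofReal_toReal (hmne ω)]
      exact min_eq_left_iff.mp h2.symm
    · intro h
      rw [hTt, min_eq_left h, ENNReal.toReal_ofReal hT0.le]
  -- G is finite and positive below t
  have hGtop : ∀ s, G s ≠ ∞ := fun s => measure_ne_top P _
  have hGpos : ∀ s : ℝ, s ≤ t → G s ≠ 0 := by
    intro s hst
    have hle : P {ω | t < Tt ω} ≤ G s := by
      refine measure_mono_ae ?_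
      filter_upwards [hae] with ω hω hmem
      obtain ⟨hT0, _, hTt, _⟩ := hω
      have h1 : ENNReal.ofReal s ≤ ENNReal.ofReal (Tt ω) :=
        ENNReal.ofReal_le_ofReal (hst.trans hmem.le)
      have h2 : ENNReal.ofReal (Tt ω) = min (ENNReal.ofReal (T ω)) (C ω) := by
        rw [hTt, ENNReal.ofReal_toReal (hmne ω)]
      exact h1.trans (h2.le.trans (min_le_right _ _))
    exact fun h0 => absurd (lt_of_lt_of_le htpos hle) (by simp [h0])
  have hGmeas : Measurable G := by
    have : Antitone G := by
      intro a b hab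
      exact measure_mono fun ω h => le_trans (ENNReal.ofReal_le_ofReal hab) h
    exact this.measurable
  -- product formula for the at-risk probability
  have hprod : ∀ s : ℝ, 0 < s → P {ω | s ≤ Tt ω} = P {ω | s ≤ T ω} * G s := by
    intro s hs
    have hind := hindep.measure_inter_preimage_eq_mul (Ici (ENNReal.ofReal s))
      (Ici s ×ˢ (univ : Set ℕ)) measurableSet_Ici (measurableSet_Ici.prod MeasurableSet.univ)
    have hpre1 : C ⁻¹' Ici (ENNReal.ofReal s) = {ω | ENNReal.ofReal s ≤ C ω} := rfl
    have hpre2 : (fun ω => (T ω, D ω)) ⁻¹' (Ici s ×ˢ (univ : Set ℕ)) = {ω | s ≤ T ω} := by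
      ext ω; simp [mem_prod]
    rw [hpre1, hpre2] at hind
    have hcong : P {ω | s ≤ Tt ω} =
        P ({ω | ENNReal.ofReal s ≤ C ω} ∩ {ω | s ≤ T ω}) := by
      refine measure_congr (Filter.eventuallyEq_set.mpr ?_)
      filter_upwards [hae] with ω hω
      obtain ⟨hT0, _, hTt, _⟩ := hω
      rw [hchar ω hT0 hTt s hs]
      constructor
      · rintro ⟨h1, h2⟩; exact ⟨h2, h1⟩
      · rintro ⟨h1, h2⟩; exact ⟨h2, h1⟩
    rw [hcong, hind, mul_comm]
  -- μt j has density G with respect to μ j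
  have hpairm : Measurable fun ω => (T ω, D ω) := hT.prodMk hD
  have hμtd : μt j = (μ j).withDensity G := by
    have hmap : Measure.map (fun ω => ((T ω, D ω), C ω)) P =
        (Measure.map (fun ω => (T ω, D ω)) P).prod (Measure.map C P) :=
      (indepFun_iff_map_prod_eq_prod_map_map hpairm.aemeasurable hC.aemeasurable).mp hindep.symm
    ext A hA
    rw [hμt, hμ, Measure.map_apply hTt hA, Measure.restrict_apply (hTt hA),
      withDensity_apply _ hA]
    set S : Set ((ℝ × ℕ) × ℝ≥0∞) :=
      {p | p.1.1 ∈ A ∧ p.1.2 = j ∧ ENNReal.ofReal p.1.1 ≤ p.2} with hSdef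
    have hSm : MeasurableSet S := by
      have h1 : MeasurableSet {p : (ℝ × ℕ) × ℝ≥0∞ | p.1.1 ∈ A} :=
        (measurable_fst.comp measurable_fst) hA
      have h2 : MeasurableSet {p : (ℝ × ℕ) × ℝ≥0∞ | p.1.2 = j} :=
        (measurable_snd.comp measurable_fst) (measurableSet_singleton j)
      have h3 : MeasurableSet {p : (ℝ × ℕ) × ℝ≥0∞ | ENNReal.ofReal p.1.1 ≤ p.2} :=
        measurableSet_le (ENNReal.measurable_ofReal.comp (measurable_fst.comp measurable_fst))
          measurable_snd
      exact (h1.inter (h2.inter h3))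
    have h1 : P (Tt ⁻¹' A ∩ {ω | Dt ω = j}) =
        P ((fun ω => ((T ω, D ω), C ω)) ⁻¹' S) := by
      refine measure_congr (Filter.eventuallyEq_set.mpr ?_)
      filter_upwards [hae] with ω hω
      obtain ⟨hT0, hDtω, hTtω, hTt0⟩ := hω
      simp only [mem_inter_iff, mem_preimage, mem_setOf_eq, hSdef]
      constructor
      · rintro ⟨hA1, hDj⟩
        have hTeq : Tt ω = T ω := by
          by_contra hne
          rw [hDtω, if_neg hne] at hDj
          omega
        refine ⟨by rwa [← hTeq], ?_, (heqT ω hT0 hTtω).mp hTeq⟩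
        rw [hDtω, if_pos hTeq] at hDj
        exact hDj
      · rintro ⟨hA1, hDj, hCge⟩
        have hTeq : Tt ω = T ω := (heqT ω hT0 hTtω).mpr hCge
        exact ⟨by rw [hTeq]; exact hA1, by rw [hDtω, if_pos hTeq]; exact hDj⟩
    rw [h1, ← Measure.map_apply (hpairm.prodMk hC) hSm, hmap, Measure.prod_apply hSm]
    have h2 : ∀ x : ℝ × ℕ, (Measure.map C P) (Prod.mk x ⁻¹' S) =
        (A ×ˢ ({j} : Set ℕ)).indicator (fun x => G x.1) x := by
      intro x
      by_cases hx : x ∈ A ×ˢ ({j} : Set ℕ)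
      · have hx1 : x.1 ∈ A := hx.1
        have hx2 : x.2 = j := hx.2
        have : Prod.mk x ⁻¹' S = Ici (ENNReal.ofReal x.1) := by
          ext c; simp [hSdef, hx1, hx2, mem_Ici]
        rw [this, indicator_of_mem hx, Measure.map_apply hC measurableSet_Ici]
        rfl
      · have : Prod.mk x ⁻¹' S = ∅ := by
          ext c
          simp only [hSdef, mem_preimage, mem_setOf_eq, mem_empty_iff_false, iff_false, not_and]
          intro h1 h2
          exact absurd (mem_prod.mpr ⟨h1, mem_singleton_iff.mpr h2⟩) hx
        rw [this, indicator_of_notMem hx, measure_empty]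
    rw [lintegral_congr h2,
      lintegral_indicator (hA.prod (measurableSet_singleton j)) _,
      setLIntegral_map (f := fun x : ℝ × ℕ => G x.1) (hA.prod (measurableSet_singleton j))
        (hGmeas.comp measurable_fst) hpairm]
    have hpre : (fun ω => (T ω, D ω)) ⁻¹' (A ×ˢ ({j} : Set ℕ)) =
        T ⁻¹' A ∩ {ω | D ω = j} := by
      ext ω
      exact ⟨fun h => ⟨h.1, h.2⟩, fun h => ⟨h.1, h.2⟩⟩
    rw [setLIntegral_map hA hGmeas hT, Measure.restrict_restrict (hT hA), hpre]
  -- main computation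
  rw [hHt, hH, hμtd, restrict_withDensity measurableSet_Ioc,
    lintegral_withDensity_eq_lintegral_mul_non_measurable _ hGmeas
      (Filter.Eventually.of_forall fun s => measure_lt_top P _)]
  refine setLIntegral_congr_fun measurableSet_Ioc (fun s hs => ?_)
  rw [Pi.mul_apply, hprod s hs.1,
    ENNReal.mul_inv (Or.inr (hGtop s)) (Or.inl (measure_ne_top P _)),
    mul_comm, mul_assoc, ENNReal.inv_mul_cancel (hGpos s hs.2) (hGtop s), mul_one]
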